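/- Reversing the orientation of a virtual knot transforms the odd writhe polynomial by f_{K*}(t) = t² · f_K(t⁻¹). Equivalently, at the level of a signed oriented chord diagram: reversing the circle orientation (keeping chord orientations and signs determined by the crossing data) sends each exponent N(c) = i − j to j − i + 2, preserving signs and oddness of chords. -/

import Mathlib

open Finset LaurentPolynomial

/-- A signed, oriented chord diagram (combinatorial Gauss diagram) with `n` chords:
the `2*n` chord endpoints on the circle are the elements of `Fin (2*n)` in (positive)
cyclic order; chord `i` has over endpoint `c⁺ = ep (i, true)`, under endpoint
`c⁻ = ep (i, false)` and a sign (writhe) `sign i ∈ {1, -1}`. -/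
structure ChordDiagram (n : ℕ) where
  ep : Fin n × Bool ≃ Fin (2 * n)
  sign : Fin n → ℤ
  sign_unit : ∀ i, sign i = 1 ∨ sign i = -1

namespace ChordDiagram

variable {n : ℕ}

/-- the over endpoint `c⁺` of a chord -/
def over' (D : ChordDiagram n) (i : Fin n) : Fin (2 * n) := D.ep (i, true)

/-- the under endpoint `c⁻` of a chord -/
def under (D : ChordDiagram n) (i : Fin n) : Fin (2 * n) := D.ep (i, false)

/-- the number of steps from `b` to `x`, travelling in the positive direction
around the circle -/
def relpos (b x : Fin (2 * n)) : ℕ := (x.val + 2 * n - b.val) % (2 * n)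

/-- `x` lies strictly between the endpoints of chord `i`, on the side swept out
going from `c⁺` to `c⁻` in the positive direction -/
def StrictlyBetween (D : ChordDiagram n) (i : Fin n) (x : Fin (2 * n)) : Prop :=
  0 < relpos (D.over' i) x ∧ relpos (D.over' i) x < relpos (D.over' i) (D.under i)

instance (D : ChordDiagram n) (i : Fin n) (x : Fin (2 * n)) :
    Decidable (D.StrictlyBetween i x) := inferInstanceAs (Decidable (_ ∧ _))

/-- two distinct chords interlink if their endpoints alternate around the circle,
i.e. exactly one endpoint of `j` lies strictly between the endpoints of `i` -/
def Interlinks (D : ChordDiagram n) (i j : Fin n) : Prop :=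
  i ≠ j ∧ Xor' (D.StrictlyBetween i (D.over' j)) (D.StrictlyBetween i (D.under j))

instance (D : ChordDiagram n) (i j : Fin n) : Decidable (D.Interlinks i j) :=
  inferInstanceAs (Decidable (_ ∧ ((_ ∧ ¬_) ∨ (_ ∧ ¬_))))

/-- the number of chords interlinking chord `i` -/
def interlinkCount (D : ChordDiagram n) (i : Fin n) : ℕ :=
  (univ.filter fun j => D.Interlinks i j).card

/-- the number of chord endpoints lying (strictly) on one side of chord `i` -/
def sideCount (D : ChordDiagram n) (i : Fin n) : ℕ :=
  (univ.filter fun x => D.StrictlyBetween i x).card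

/-- a chord is odd if it interlinks an odd number of other chords -/
def OddChord (D : ChordDiagram n) (i : Fin n) : Prop := Odd (D.interlinkCount i)

instance (D : ChordDiagram n) (i : Fin n) : Decidable (D.OddChord i) :=
  inferInstanceAs (Decidable (Odd _))

/-- The label `N(a)` of the arc whose terminal point is `a`: the sum of the signs of
all chords whose over endpoint is met strictly before their under endpoint when
traversing the circle once in the positive direction starting inside this arc. -/
def arcLabel (D : ChordDiagram n) (a : Fin (2 * n)) : ℤ :=
  ∑ i ∈ univ.filter fun i => relpos a (D.over' i) < relpos a (D.under i), D.sign i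

/-- The value `N(c)` of a chord: for a positive chord, the difference `x - y` of the
arc labels just before `c⁺` and just before `c⁻`; for a negative chord, the difference
`z - w` of the arc labels just after `c⁺` and just after `c⁻` (the label just after an
over endpoint is the label just before it minus the sign, and the label just after an
under endpoint is the label just before it plus the sign). -/
def chordVal (D : ChordDiagram n) (i : Fin n) : ℤ :=
  if D.sign i = 1 then D.arcLabel (D.over' i) - D.arcLabel (D.under i)
  else (D.arcLabel (D.over' i) - D.sign i) - (D.arcLabel (D.under i) + D.sign i)

/-- the odd writhe `J(K) = Σ_{c odd} w(c)` -/
def oddWrithe (D : ChordDiagram n) : ℤ :=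
  ∑ i ∈ univ.filter fun i => D.OddChord i, D.sign i

/-- the odd writhe polynomial `f_K(t) = Σ_{c odd} w(c) · t^{N(c)} ∈ ℤ[t,t⁻¹]` -/
noncomputable def owp (D : ChordDiagram n) : LaurentPolynomial ℤ :=
  ∑ i ∈ univ.filter fun i => D.OddChord i, C (D.sign i) * T (D.chordVal i)

/-- evaluation of the odd writhe polynomial at a rational number `x`:
`Σ_{c odd} w(c) · x^{N(c)}` -/
def owpEval (D : ChordDiagram n) (x : ℚ) : ℚ :=
  ∑ i ∈ univ.filter fun i => D.OddChord i, (D.sign i : ℚ) * x ^ D.chordVal i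

/-- the coefficient of `t^k` in a Laurent polynomial -/
def coeffOf (f : LaurentPolynomial ℤ) (k : ℤ) : ℤ := (AddMonoidAlgebra.coeff f : ℤ →₀ ℤ) k

/-- the degree `Deg f = max { |i| : coefficient of tⁱ in f is nonzero }` -/
def owpDeg (f : LaurentPolynomial ℤ) : ℕ := (AddMonoidAlgebra.coeff f : ℤ →₀ ℤ).support.sup fun k => k.natAbs

/-- reversing the orientation of the knot: the cyclic order of the endpoints is
reversed, while signs and over/under data of the crossings are preserved -/
def reverse (D : ChordDiagram n) : ChordDiagram n where
  ep := D.ep.trans Fin.revPerm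
  sign := D.sign
  sign_unit := D.sign_unit

/-- the mirror image: every crossing is switched, so every chord's over and under
endpoints are exchanged and its sign is negated -/
def mirror (D : ChordDiagram n) : ChordDiagram n where
  ep := (Equiv.prodCongr (Equiv.refl (Fin n))
      ⟨fun b => !b, fun b => !b, Bool.not_not, Bool.not_not⟩).trans D.ep
  sign := fun i => -D.sign i
  sign_unit := fun i => (D.sign_unit i).elim
    (fun h => Or.inr (show -D.sign i = -1 by rw [h]))
    (fun h => Or.inl (show -D.sign i = 1 by rw [h]; ring))

/-! ### Planarity via the Euler characteristic of the carrier surface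

The diagram determines a 4-valent graph (vertices = chords, edges = the `2*n` arcs of
the circle) together with a rotation system at each vertex, coming from the structure
of a transversal crossing: for a positive crossing the counterclockwise order of the
four ends is (over-out, under-out, over-in, under-in), for a negative crossing it is
(over-out, under-in, over-in, under-out).  The diagram is realizable by a classical
(planar) knot diagram iff the resulting closed oriented carrier surface is a sphere,
i.e. iff `V - E + F = n - 2n + F = 2`.

Darts are encoded as pairs `(p, io) : Fin (2*n) × Bool`, meaning the end of an arc
at the vertex through the circle point `p`, with `io = true` for the outgoing arc
(from `p` to `p+1`) and `io = false` for the incoming arc (from `p-1` to `p`). -/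

/-- the other endpoint of the chord through a given endpoint -/
def otherEnd (D : ChordDiagram n) (p : Fin (2 * n)) : Fin (2 * n) :=
  D.ep ((D.ep.symm p).1, !(D.ep.symm p).2)

lemma otherEnd_otherEnd (D : ChordDiagram n) (p : Fin (2 * n)) :
    D.otherEnd (D.otherEnd p) = p := by
  simp [otherEnd]

/-- whether the rotation at the vertex toggles the in/out marker when passing from
the end at `p` to the end at the other endpoint of its chord -/
def tog (D : ChordDiagram n) (p : Fin (2 * n)) : Bool :=
  if D.sign (D.ep.symm p).1 = 1 then !(D.ep.symm p).2 else (D.ep.symm p).2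

/-- the vertex rotation permutation on darts -/
def vertexPerm (D : ChordDiagram n) : Equiv.Perm (Fin (2 * n) × Bool) :=
  Equiv.trans
    ⟨fun x => (x.1, xor x.2 (D.tog x.1)), fun x => (x.1, xor x.2 (D.tog x.1)),
      fun x => by simp [Bool.xor_assoc], fun x => by simp [Bool.xor_assoc]⟩
    ⟨fun x => (D.otherEnd x.1, x.2), fun x => (D.otherEnd x.1, x.2),
      fun x => by simp [otherEnd_otherEnd], fun x => by simp [otherEnd_otherEnd]⟩

/-- the edge involution on darts, matching the two ends of each arc -/
def arcPerm (D : ChordDiagram n) : Equiv.Perm (Fin (2 * n) × Bool) :=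
  ⟨fun x => if x.2 then (finRotate (2 * n) x.1, false) else ((finRotate (2 * n)).symm x.1, true),
   fun x => if x.2 then (finRotate (2 * n) x.1, false) else ((finRotate (2 * n)).symm x.1, true),
   fun x => by rcases x with ⟨p, _ | _⟩ <;> simp [-finRotate_apply, -finRotate_symm_apply],
   fun x => by rcases x with ⟨p, _ | _⟩ <;> simp [-finRotate_apply, -finRotate_symm_apply]⟩

/-- the face permutation on darts -/
def facePerm (D : ChordDiagram n) : Equiv.Perm (Fin (2 * n) × Bool) :=
  (D.arcPerm).trans D.vertexPerm

/-- the number of faces: the number of orbits of the face permutation -/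
noncomputable def faceCount (D : ChordDiagram n) : ℕ :=
  Nat.card (MulAction.orbitRel.Quotient (Subgroup.zpowers D.facePerm) (Fin (2 * n) × Bool))

/-- the chord diagram arises from a classical (planar) knot diagram: the carrier
surface has Euler characteristic `V - E + F = n - 2n + faceCount = 2` -/
def PlanarRealizable (D : ChordDiagram n) : Prop := D.faceCount = n + 2

end ChordDiagram


namespace ChordDiagram

variable {n : ℕ}

lemma relpos_eq (b x : Fin (2 * n)) :
    relpos b x = if b.val ≤ x.val then x.val - b.val else x.val + 2 * n - b.val := by
  have hb := b.isLt; have hx := x.isLt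
  unfold relpos
  split
  · have h2 : x.val + 2 * n - b.val - 2 * n = x.val - b.val := by omega
    rw [Nat.mod_eq_sub_mod (by omega), h2, Nat.mod_eq_of_lt (by omega)]
  · exact Nat.mod_eq_of_lt (by omega)

lemma relpos_self (b : Fin (2 * n)) : relpos b b = 0 := by
  rw [relpos_eq]; simp

lemma relpos_lt (b x : Fin (2 * n)) : relpos b x < 2 * n := by
  have hb := b.isLt; have hx := x.isLt
  rw [relpos_eq]; split <;> omega

lemma relpos_add {b x : Fin (2 * n)} (h : x ≠ b) :
    relpos b x + relpos x b = 2 * n := by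
  have hb := b.isLt; have hx := x.isLt
  have hxb : x.val ≠ b.val := fun h' => h (Fin.ext h')
  rw [relpos_eq, relpos_eq]; split <;> split <;> omega

lemma relpos_eq_zero (b x : Fin (2 * n)) : relpos b x = 0 ↔ x = b := by
  have hb := b.isLt; have hx := x.isLt
  rw [relpos_eq, Fin.ext_iff]; split <;> omega

lemma relpos_right_inj (b x y : Fin (2 * n)) :
    relpos b x = relpos b y ↔ x = y := by
  have hb := b.isLt; have hx := x.isLt; have hy := y.isLt
  rw [relpos_eq, relpos_eq, Fin.ext_iff]; split <;> split <;> omega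

lemma relpos_rev (b x : Fin (2 * n)) :
    relpos (Fin.revPerm b) (Fin.revPerm x) = relpos x b := by
  have hb := b.isLt; have hx := x.isLt
  unfold relpos
  simp only [Fin.revPerm_apply, Fin.val_rev]
  congr 1
  omega

lemma reverse_over (D : ChordDiagram n) (i : Fin n) :
    D.reverse.over' i = Fin.revPerm (D.over' i) := rfl

lemma reverse_under (D : ChordDiagram n) (i : Fin n) :
    D.reverse.under i = Fin.revPerm (D.under i) := rfl

lemma reverse_sign (D : ChordDiagram n) : D.reverse.sign = D.sign := rfl

lemma over_ne_under (D : ChordDiagram n) (i : Fin n) : D.over' i ≠ D.under i := by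
  intro h
  simpa using D.ep.injective h

lemma over_ne_over (D : ChordDiagram n) {i j : Fin n} (h : i ≠ j) :
    D.over' i ≠ D.over' j := by
  intro h'
  exact h (by simpa using D.ep.injective h')

lemma over_ne_under' (D : ChordDiagram n) (i j : Fin n) :
    D.over' i ≠ D.under j := by
  intro h'
  simpa using congrArg Prod.snd (D.ep.injective h')

/-- reversing the circle sends `StrictlyBetween` to the complementary side -/
lemma strictlyBetween_reverse (D : ChordDiagram n) (i : Fin n) (x : Fin (2 * n)) :
    D.reverse.StrictlyBetween i (Fin.revPerm x) ↔
      x ≠ D.over' i ∧ x ≠ D.under i ∧ ¬ D.StrictlyBetween i x := by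
  have hou := D.over_ne_under i
  simp only [StrictlyBetween, reverse_over, reverse_under, relpos_rev]
  set o := D.over' i with ho
  set u := D.under i with hu
  by_cases hxo : x = o
  · simp [hxo, relpos_self]
  by_cases hxu : x = u
  · simp [hxu]
  · have h1 := relpos_add hxo
    have h2 := relpos_add (Ne.symm hou)
    have h3 : relpos o x ≠ relpos o u := by
      simp only [ne_eq, relpos_right_inj]; exact hxu
    have h4 : relpos o x ≠ 0 := by simp only [ne_eq, relpos_eq_zero]; exact hxo
    have h5 : relpos o u ≠ 0 := by simp only [ne_eq, relpos_eq_zero]; exact Ne.symm hou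
    have h6 := relpos_lt o x
    have h7 := relpos_lt o u
    simp only [hxo, hxu, ne_eq, not_false_eq_true, true_and]
    omega

lemma interlinks_reverse (D : ChordDiagram n) (i j : Fin n) :
    D.reverse.Interlinks i j ↔ D.Interlinks i j := by
  unfold Interlinks
  by_cases hij : i = j
  · simp [hij]
  have h1 : D.reverse.StrictlyBetween i (D.reverse.over' j) ↔
      ¬ D.StrictlyBetween i (D.over' j) := by
    rw [reverse_over, strictlyBetween_reverse]
    have := D.over_ne_over (Ne.symm hij)
    have := D.over_ne_under' j i
    tauto
  have h2 : D.reverse.StrictlyBetween i (D.reverse.under j) ↔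
      ¬ D.StrictlyBetween i (D.under j) := by
    rw [reverse_under, strictlyBetween_reverse]
    have := (D.over_ne_under' i j).symm
    have h3 : D.under j ≠ D.under i := by
      intro h'
      exact (Ne.symm hij) (by simpa using D.ep.injective h')
    tauto
  rw [h1, h2]
  unfold Xor' Xor
  tauto

lemma oddChord_reverse (D : ChordDiagram n) (i : Fin n) :
    D.reverse.OddChord i ↔ D.OddChord i := by
  unfold OddChord interlinkCount
  have : (univ.filter fun j => D.reverse.Interlinks i j) =
      univ.filter fun j => D.Interlinks i j := by
    ext j; simp [interlinks_reverse]
  rw [this]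

lemma arcLabel_reverse_over (D : ChordDiagram n) (i : Fin n) :
    D.reverse.arcLabel (Fin.revPerm (D.over' i)) =
      (∑ j, D.sign j) - D.arcLabel (D.over' i) + D.sign i := by
  unfold arcLabel
  simp only [reverse_over, reverse_under, relpos_rev, reverse_sign]
  set a := D.over' i with ha
  have hset : (univ.filter fun j => relpos (D.over' j) a < relpos (D.under j) a) =
      insert i (univ.filter fun j => ¬ relpos a (D.over' j) < relpos a (D.under j)) := by
    ext j
    simp only [mem_filter, mem_univ, true_and, mem_insert]
    by_cases hji : j = i
    · subst hji
      simp only [← ha, relpos_self, eq_self_iff_true, true_or, iff_true]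
      have : relpos (D.under j) a ≠ 0 := by
        simp only [ne_eq, relpos_eq_zero, ha]
        exact fun h => D.over_ne_under j h
      omega
    · have hoa : D.over' j ≠ a := D.over_ne_over hji
      have hua : D.under j ≠ a := (D.over_ne_under' i j).symm ∘ Eq.symm ∘ Eq.symm
      have hua' : D.under j ≠ a := fun h => (D.over_ne_under' i j) h.symm
      have h1 := relpos_add hoa
      have h2 := relpos_add hua'
      have h3 : relpos a (D.over' j) ≠ relpos a (D.under j) := by
        simp only [ne_eq, relpos_right_inj]; exact D.over_ne_under j
      simp only [hji, false_or]
      omega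
  rw [hset, Finset.sum_insert]
  · have := Finset.sum_filter_add_sum_filter_not univ
      (fun j => relpos a (D.over' j) < relpos a (D.under j)) D.sign
    omega
  · simp only [mem_filter, mem_univ, true_and, not_not, not_lt, not_le]
    rw [← ha, relpos_self]
    have : relpos a (D.under i) ≠ 0 := by
      simp only [ne_eq, relpos_eq_zero, ha]
      exact fun h => D.over_ne_under i h.symm
    omega

lemma arcLabel_reverse_under (D : ChordDiagram n) (i : Fin n) :
    D.reverse.arcLabel (Fin.revPerm (D.under i)) =
      (∑ j, D.sign j) - D.arcLabel (D.under i) - D.sign i := by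
  unfold arcLabel
  simp only [reverse_over, reverse_under, relpos_rev, reverse_sign]
  set a := D.under i with ha
  have hset : (univ.filter fun j => relpos (D.over' j) a < relpos (D.under j) a) =
      (univ.filter fun j => ¬ relpos a (D.over' j) < relpos a (D.under j)).erase i := by
    ext j
    simp only [mem_filter, mem_univ, true_and, Finset.mem_erase]
    by_cases hji : j = i
    · subst hji
      simp only [← ha, relpos_self, ne_eq, not_true_eq_false, false_and, iff_false, not_lt,
        Nat.le_zero]
      omega
    · have hoa : D.over' j ≠ a := D.over_ne_under' j i
      have hua' : D.under j ≠ a := fun h => hji (by simpa using D.ep.injective h)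
      have h1 := relpos_add hoa
      have h2 := relpos_add hua'
      have h3 : relpos a (D.over' j) ≠ relpos a (D.under j) := by
        simp only [ne_eq, relpos_right_inj]; exact D.over_ne_under j
      simp only [ne_eq, hji, not_false_eq_true, true_and]
      omega
  rw [hset, Finset.sum_erase_eq_sub]
  · have := Finset.sum_filter_add_sum_filter_not univ
      (fun j => relpos a (D.over' j) < relpos a (D.under j)) D.sign
    omega
  · simp only [mem_filter, mem_univ, true_and, not_lt]
    rw [← ha, relpos_self]
    omega

lemma chordVal_reverse (D : ChordDiagram n) (i : Fin n) :
    D.reverse.chordVal i = 2 - D.chordVal i := by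
  unfold chordVal
  have h1 := D.arcLabel_reverse_over i
  have h2 := D.arcLabel_reverse_under i
  rw [show D.reverse.sign = D.sign from rfl,
    show D.reverse.over' i = Fin.revPerm (D.over' i) from rfl,
    show D.reverse.under i = Fin.revPerm (D.under i) from rfl, h1, h2]
  rcases D.sign_unit i with h | h <;> simp [h] <;> ring

end ChordDiagram

open ChordDiagram

/-- reversing the orientation transforms the odd writhe polynomial by
`f_{K*}(t) = t² · f_K(t⁻¹)`; each exponent `N(c)` becomes `2 - N(c)` while signs and
oddness of chords are preserved. -/
theorem stmt_9 {n : ℕ} (D : ChordDiagram n) :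
    D.reverse.owp = T 2 * LaurentPolynomial.invert D.owp ∧
    ∀ i : Fin n, D.reverse.sign i = D.sign i ∧ (D.reverse.OddChord i ↔ D.OddChord i) ∧
      D.reverse.chordVal i = 2 - D.chordVal i := by
  refine ⟨?_, fun i => ⟨rfl, D.oddChord_reverse i, D.chordVal_reverse i⟩⟩
  unfold owp
  have hset : (univ.filter fun i => D.reverse.OddChord i) =
      univ.filter fun i => D.OddChord i := by
    ext j; simp [oddChord_reverse]
  rw [hset, map_sum, Finset.mul_sum]
  refine Finset.sum_congr rfl fun i _ => ?_
  rw [show D.reverse.sign = D.sign from rfl, chordVal_reverse, map_mul, invert_C, invert_T,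
    show (2 : ℤ) - D.chordVal i = 2 + (- D.chordVal i) by ring, T_add]
  ring
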